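/- Every complete nearly uniformly convex metric space is reflexive. -/

import Mathlib

open Filter Topology Metric Set MeasureTheory
open scoped ENNReal

section Defs

variable (X : Type) [MetricSpace X]

/-- `m` is a midpoint of `x` and `y`. -/
def IsMidpoint {X : Type} [MetricSpace X] (x y m : X) : Prop :=
  dist x m = dist x y / 2 ∧ dist y m = dist x y / 2

/-- `(X,d)` admits midpoints. -/
def AdmitsMidpoints : Prop := ∀ x y : X, ∃ m, IsMidpoint x y m

/-- The `p`-mean of two nonnegative reals, `p ∈ [1,∞]`. -/
noncomputable def pMean (p : ℝ≥0∞) (a b : ℝ) : ℝ :=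
  if p = ∞ then max a b else ((a ^ p.toReal + b ^ p.toReal) / 2) ^ (1 / p.toReal)

/-- `p`-convexity. -/
def PConvex (p : ℝ≥0∞) : Prop :=
  AdmitsMidpoints X ∧ ∀ x y z m : X, IsMidpoint x y m →
    dist m z ≤ pMean p (dist x z) (dist y z)

/-- strict `p`-convexity. -/
def StrictlyPConvex (p : ℝ≥0∞) : Prop :=
  AdmitsMidpoints X ∧ ∀ x y z m : X, IsMidpoint x y m →
    (if p = 1 then |dist x z - dist y z| < dist x y else x ≠ y) →
    dist m z < pMean p (dist x z) (dist y z)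

/-- uniform `p`-convexity. -/
def UniformlyPConvex (p : ℝ≥0∞) : Prop :=
  AdmitsMidpoints X ∧ ∀ ε : ℝ, 0 < ε → ∃ ρ : ℝ, ρ ∈ Set.Ioo (0:ℝ) 1 ∧
    ∀ x y z m : X, IsMidpoint x y m →
      (if p = 1 then |dist x z - dist y z| + ε * pMean 1 (dist x z) (dist y z) < dist x y
        else ε * pMean p (dist x z) (dist y z) < dist x y) →
      dist m z ≤ (1 - ρ) * pMean p (dist x z) (dist y z)

/-- Busemann non-positive curvature condition. -/
def Busemann : Prop :=
  AdmitsMidpoints X ∧ ∀ x₀ x₁ y₀ y₁ xm ym : X,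
    IsMidpoint x₀ x₁ xm → IsMidpoint y₀ y₁ ym →
      dist xm ym ≤ (dist x₀ y₀ + dist x₁ y₁) / 2

/-- `γ` (restricted to `[0,1]`) is a geodesic from `x` to `y`. -/
def IsGeodesic {X : Type} [MetricSpace X] (γ : ℝ → X) (x y : X) : Prop :=
  γ 0 = x ∧ γ 1 = y ∧ ∀ s ∈ Set.Icc (0:ℝ) 1, ∀ t ∈ Set.Icc (0:ℝ) 1,
    dist (γ s) (γ t) = |s - t| * dist x y

/-- A subset is (geodesically) convex if it contains all geodesics between its points. -/
def GConvex {X : Type} [MetricSpace X] (C : Set X) : Prop :=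
  ∀ x ∈ C, ∀ y ∈ C, ∀ γ : ℝ → X, IsGeodesic γ x y → ∀ t ∈ Set.Icc (0:ℝ) 1, γ t ∈ C

/-- The convex hull: the smallest convex set containing `A`. -/
def gConvexHull {X : Type} [MetricSpace X] (A : Set X) : Set X :=
  ⋂₀ {C : Set X | GConvex C ∧ A ⊆ C}

/-- `∞`-convexity. -/
def InftyConvex : Prop :=
  AdmitsMidpoints X ∧ ∀ x y z m : X, IsMidpoint x y m →
    dist m z ≤ max (dist x z) (dist y z)

/-- strict `∞`-convexity. -/
def StrictlyInftyConvex : Prop :=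
  AdmitsMidpoints X ∧ ∀ x y z m : X, IsMidpoint x y m → x ≠ y →
    dist m z < max (dist x z) (dist y z)

/-- uniform `∞`-convexity. -/
def UniformlyInftyConvex : Prop :=
  AdmitsMidpoints X ∧ ∀ ε : ℝ, 0 < ε → ∃ ρ : ℝ, ρ ∈ Set.Ioo (0:ℝ) 1 ∧
    ∀ x y z m : X, IsMidpoint x y m →
      ε * max (dist x z) (dist y z) < dist x y →
      dist m z ≤ (1 - ρ) * max (dist x z) (dist y z)

/-- `ρ` works as a modulus of nearly uniform convexity for the parameters `ε`, `R`:
for every infinite `ε`-separated family in a ball of radius `r ≤ R` around `y`, the ball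
`B_{(1-ρ)r}(y)` intersects the closed convex hull of the family. -/
def NUCModulus (ε R ρ : ℝ) : Prop :=
  ∀ (ι : Type) [Infinite ι], ∀ (x : ι → X) (y : X) (r : ℝ), r ≤ R →
    (∀ i j : ι, i ≠ j → ε ≤ dist (x i) (x j)) → (∀ i, dist (x i) y ≤ r) →
    (Metric.closedBall y ((1 - ρ) * r) ∩ closure (gConvexHull (Set.range x))).Nonempty

/-- Nearly uniform convexity. -/
def NearlyUniformlyConvex : Prop :=
  InftyConvex X ∧ ∀ R : ℝ, 0 < R → ∀ ε : ℝ, 0 < ε → ∃ ρ : ℝ, 0 < ρ ∧ NUCModulus X ε R ρ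

/-- Reflexivity: every decreasing directed family of nonempty bounded closed convex sets
has nonempty intersection. -/
def MetricReflexive : Prop :=
  ∀ (I : Type) [Nonempty I] [Preorder I] [IsDirected I (· ≤ ·)], ∀ C : I → Set X,
    (∀ i, (C i).Nonempty) → (∀ i, Bornology.IsBounded (C i)) → (∀ i, IsClosed (C i)) →
    (∀ i, GConvex (C i)) → (∀ i j : I, j ≤ i → C i ⊆ C j) → (⋂ i, C i).Nonempty

/-- The co-convex topology: the weakest topology containing all complements of closed
convex sets. -/
def coConvexTopology : TopologicalSpace X :=
  TopologicalSpace.generateFrom {U : Set X | ∃ C : Set X, IsClosed C ∧ GConvex C ∧ U = Cᶜ}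

/-- The set of limit points of the sequence `x` in the co-convex topology. -/
def coLim {X : Type} [MetricSpace X] (x : ℕ → X) : Set X :=
  {a : X | Filter.Tendsto x Filter.atTop (@nhds X (coConvexTopology X) a)}

/-- Countable reflexivity. -/
def CountableReflexive : Prop :=
  MetricReflexive X ∧ ∀ x : ℕ → X, (coLim x).Nonempty →
    ∃ φ : ℕ → ℕ, StrictMono φ ∧
      coLim x = ⋂ m : ℕ, closure (gConvexHull ((fun n => x (φ n)) '' Set.Ici m))

/-- Quasi-convexity: all sublevel sets are convex. -/
def GQuasiConvex {X : Type} [MetricSpace X] (f : X → ℝ) : Prop :=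
  ∀ c : ℝ, GConvex {x : X | f x ≤ c}

/-- Quasi-monotonicity: both quasi-convex and quasi-concave. -/
def GQuasiMonotone {X : Type} [MetricSpace X] (f : X → ℝ) : Prop :=
  GQuasiConvex f ∧ GQuasiConvex (fun x => -f x)

/-- The `p`-mean for real `p ∈ [1,∞)`. -/
noncomputable def pMeanR (p a b : ℝ) : ℝ := ((a ^ p + b ^ p) / 2) ^ (1 / p)

/-- `p`-convexity for real `p`. -/
def PConvexR (p : ℝ) : Prop :=
  AdmitsMidpoints X ∧ ∀ x y z m : X, IsMidpoint x y m →
    dist m z ≤ pMeanR p (dist x z) (dist y z)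

/-- strict `p`-convexity for real `p`. -/
def StrictlyPConvexR (p : ℝ) : Prop :=
  AdmitsMidpoints X ∧ ∀ x y z m : X, IsMidpoint x y m →
    (if p = 1 then |dist x z - dist y z| < dist x y else x ≠ y) →
    dist m z < pMeanR p (dist x z) (dist y z)

/-- uniform `p`-convexity for real `p`. -/
def UniformlyPConvexR (p : ℝ) : Prop :=
  AdmitsMidpoints X ∧ ∀ ε : ℝ, 0 < ε → ∃ ρ : ℝ, ρ ∈ Set.Ioo (0:ℝ) 1 ∧
    ∀ x y z m : X, IsMidpoint x y m →
      ε * pMeanR p (dist x z) (dist y z) < dist x y →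
      dist m z ≤ (1 - ρ) * pMeanR p (dist x z) (dist y z)

/-- `ω(z,(x_n)) = limsup_n d(z,x_n)`. -/
noncomputable def asymRadius {X : Type} [MetricSpace X] (x : ℕ → X) (z : X) : ℝ :=
  Filter.limsup (fun n => dist z (x n)) Filter.atTop

/-- `a` is the (unique) asymptotic center of the sequence `x`. -/
def IsAsymptoticCenter {X : Type} [MetricSpace X] (x : ℕ → X) (a : X) : Prop :=
  (∀ z : X, asymRadius x a ≤ asymRadius x z) ∧
  ∀ b : X, (∀ z : X, asymRadius x b ≤ asymRadius x z) → b = a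

/-- Weak sequential convergence: `a` is the asymptotic center of every subsequence. -/
def WeakSeqConv {X : Type} [MetricSpace X] (x : ℕ → X) (a : X) : Prop :=
  ∀ φ : ℕ → ℕ, StrictMono φ → IsAsymptoticCenter (fun n => x (φ n)) a

end Defs

section AuxReflexive

variable {X : Type} [MetricSpace X] {I : Type} [Nonempty I] [Preorder I]
  [IsDirected I (· ≤ ·)]

/-- The set of radii `s` such that every member of the family meets `closedBall y s`. -/
def famT (C : I → Set X) (y : X) : Set ℝ :=
  {s | ∀ i, (Metric.closedBall y s ∩ C i).Nonempty}

/-- The infimum of `famT`. -/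
noncomputable def famRad (C : I → Set X) (y : X) : ℝ := sInf (famT C y)

lemma famT_mono {C : I → Set X} {y : X} {s s' : ℝ} (hs : s ∈ famT C y) (hss : s ≤ s') :
    s' ∈ famT C y := fun i =>
  (hs i).mono (Set.inter_subset_inter_left _ (Metric.closedBall_subset_closedBall hss))

lemma famT_nonneg {C : I → Set X} {y : X} {s : ℝ} (hs : s ∈ famT C y) : 0 ≤ s := by
  obtain ⟨w, hw, -⟩ := hs (Classical.arbitrary I)
  exact Metric.nonempty_closedBall.1 ⟨w, hw⟩

lemma famT_bddBelow (C : I → Set X) (y : X) : BddBelow (famT C y) :=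
  ⟨0, fun _ hs => famT_nonneg hs⟩

lemma famT_nonempty {C : I → Set X} (hne : ∀ i, (C i).Nonempty)
    (hbd : ∀ i, Bornology.IsBounded (C i))
    (hdec : ∀ i j : I, j ≤ i → C i ⊆ C j) (y : X) : (famT C y).Nonempty := by
  have i₀ : I := Classical.arbitrary I
  obtain ⟨c₀, hc₀⟩ := hne i₀
  obtain ⟨B, hB⟩ := Metric.isBounded_iff.1 (hbd i₀)
  refine ⟨dist y c₀ + B, fun i => ?_⟩
  obtain ⟨k, hki, hki₀⟩ := directed_of (· ≤ ·) i i₀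
  obtain ⟨w, hw⟩ := hne k
  have hwI : w ∈ C i₀ := hdec k i₀ hki₀ hw
  have : dist w y ≤ dist y c₀ + B := by
    calc dist w y ≤ dist w c₀ + dist c₀ y := dist_triangle _ _ _
    _ ≤ B + dist c₀ y := by linarith [hB hwI hc₀]
    _ = dist y c₀ + B := by rw [dist_comm c₀ y]; ring
  exact ⟨w, Metric.mem_closedBall.2 this, hdec k i hki hw⟩

lemma famRad_nonneg {C : I → Set X} (hTne : (famT C y).Nonempty) :
    0 ≤ famRad C y :=
  le_csInf hTne fun _ hs => famT_nonneg hs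

lemma mem_famT_of_lt {C : I → Set X} {y : X} (hTne : (famT C y).Nonempty) {s : ℝ}
    (hs : famRad C y < s) : s ∈ famT C y := by
  obtain ⟨t, htT, hts⟩ := exists_lt_of_csInf_lt hTne hs
  exact famT_mono htT hts.le

lemma gConvexHull_subset {A D : Set X} (hD : GConvex D) (hAD : A ⊆ D) :
    gConvexHull A ⊆ D :=
  Set.sInter_subset_of_mem ⟨hD, hAD⟩

/-- Key step: from any center `y` one can find a new center `s` with radius `≤ ε`,
at distance at most `famRad C y + ε` from `y`. -/
lemma nuc_center_step {C : I → Set X} (h : NearlyUniformlyConvex X)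
    (hne : ∀ i, (C i).Nonempty) (hbd : ∀ i, Bornology.IsBounded (C i))
    (hcl : ∀ i, IsClosed (C i)) (hcv : ∀ i, GConvex (C i))
    (hdec : ∀ i j : I, j ≤ i → C i ⊆ C j)
    (y : X) (ε : ℝ) (hε : 0 < ε) :
    ∃ s : X, famRad C s ≤ ε ∧ dist y s ≤ famRad C y + ε := by
  classical
  have hTne : ∀ u : X, (famT C u).Nonempty := famT_nonempty hne hbd hdec
  set r := famRad C y with hrdef
  have hr0 : 0 ≤ r := famRad_nonneg (hTne y)
  by_cases hcase : r ≤ ε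
  · exact ⟨y, hcase, by simp; linarith⟩
  push_neg at hcase
  have hrpos : 0 < r := lt_trans hε hcase
  obtain ⟨ρ, hρ, hmod⟩ := h.2 (r + 1) (by linarith) ε hε
  set δ := min ε (min 1 (ρ * r / 2)) with hδdef
  have hδpos : 0 < δ := lt_min hε (lt_min one_pos (by positivity))
  have hδε : δ ≤ ε := min_le_left _ _
  have hδ1 : δ ≤ 1 := le_trans (min_le_right _ _) (min_le_left _ _)
  have hδρ : δ ≤ ρ * r / 2 := le_trans (min_le_right _ _) (min_le_right _ _)
  have ht_lt : (1 - ρ) * (r + δ) < r := by nlinarith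
  have hnotmem : (1 - ρ) * (r + δ) ∉ famT C y := fun hmem =>
    absurd (csInf_le (famT_bddBelow C y) hmem) (not_le.2 ht_lt)
  simp only [famT, Set.mem_setOf_eq, not_forall] at hnotmem
  obtain ⟨i₁, hi₁⟩ := hnotmem
  set G := Metric.closedBall y (r + δ) ∩ C i₁ with hGdef
  have hrδT : (r + δ) ∈ famT C y := mem_famT_of_lt (hTne y) (by linarith)
  have hGne : G.Nonempty := hrδT i₁
  -- no infinite ε-separated subset of G
  have nosep : ∀ S : Set X, S ⊆ G → S.Pairwise (fun a b => ε ≤ dist a b) → S.Finite := by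
    intro S hSG hsep
    by_contra hinf
    haveI : Infinite ↥S := Set.Infinite.to_subtype hinf
    obtain ⟨z', hz'ball, hz'hull⟩ := hmod ↥S Subtype.val y (r + δ) (by linarith)
      (fun i j hij => hsep i.2 j.2 fun e => hij (Subtype.ext e))
      (fun i => Metric.mem_closedBall.1 (hSG i.2).1)
    have hrange : Set.range (Subtype.val : ↥S → X) = S := Subtype.range_val
    have hhull : closure (gConvexHull (Set.range (Subtype.val : ↥S → X))) ⊆ C i₁ := by
      rw [(hcl i₁).closure_subset_iff]
      refine gConvexHull_subset (hcv i₁) ?_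
      rw [hrange]
      exact fun x hx => (hSG hx).2
    exact hi₁ ⟨z', hz'ball, hhull hz'hull⟩
  -- maximal ε-separated subset of G
  obtain ⟨M, hM⟩ := zorn_subset {S : Set X | S ⊆ G ∧ S.Pairwise fun a b => ε ≤ dist a b}
    (by
      intro c hc hchain
      refine ⟨⋃₀ c, ⟨Set.sUnion_subset fun s hs => (hc hs).1, ?_⟩,
        fun s hs => Set.subset_sUnion_of_mem hs⟩
      intro a ha b hb hab
      obtain ⟨s, hs, has⟩ := ha
      obtain ⟨t, ht, hbt⟩ := hb
      rcases hchain.total hs ht with hst | hts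
      · exact (hc ht).2 (hst has) hbt hab
      · exact (hc hs).2 has (hts hbt) hab)
  have hMG : M ⊆ G := hM.1.1
  have hMsep : M.Pairwise fun a b => ε ≤ dist a b := hM.1.2
  have hMfin : M.Finite := nosep M hMG hMsep
  -- covering property of M
  have hcover : ∀ g ∈ G, ∃ s ∈ M, dist g s < ε := by
    intro g hg
    by_contra hno
    push_neg at hno
    have hgM : g ∉ M := fun hgM => absurd (hno g hgM) (by simp [hε])
    have hins : insert g M ∈ {S : Set X | S ⊆ G ∧ S.Pairwise fun a b => ε ≤ dist a b} := by
      refine ⟨Set.insert_subset hg hMG, ?_⟩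
      haveI : Std.Symm (fun a b : X => ε ≤ dist a b) := ⟨fun a b hab => by rwa [dist_comm]⟩
      rw [Set.pairwise_insert_of_symm]
      exact ⟨hMsep, fun b hb _ => hno b hb⟩
    exact hgM (hM.2 hins (Set.subset_insert _ _) (Set.mem_insert g M))
  -- pigeonhole: some s ∈ M works for all i
  have hgood : ∃ s ∈ M, ∀ i, (Metric.closedBall s ε ∩ C i).Nonempty := by
    by_contra hbad
    push_neg at hbad
    choose! f hf using hbad
    obtain ⟨k, hk⟩ := Finset.exists_le (insert i₁ (hMfin.toFinset.image f))
    obtain ⟨w, hw1, hw2⟩ := hrδT k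
    have hwG : w ∈ G := ⟨hw1, hdec k i₁ (hk i₁ (Finset.mem_insert_self _ _)) hw2⟩
    obtain ⟨s, hsM, hws⟩ := hcover w hwG
    have hfs : f s ≤ k := hk (f s) (Finset.mem_insert_of_mem
      (Finset.mem_image_of_mem f (hMfin.mem_toFinset.2 hsM)))
    have : w ∈ Metric.closedBall s ε ∩ C (f s) :=
      ⟨Metric.mem_closedBall.2 hws.le, hdec k (f s) hfs hw2⟩
    rw [hf s hsM] at this
    exact this
  obtain ⟨s, hsM, hs⟩ := hgood
  refine ⟨s, csInf_le (famT_bddBelow C s) hs, ?_⟩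
  have hsy : dist s y ≤ r + δ := Metric.mem_closedBall.1 (hMG hsM).1
  rw [dist_comm]
  linarith

end AuxReflexive
/-- Every complete nearly uniformly convex metric space is reflexive. -/
theorem nearlyUniformlyConvex_reflexive (X : Type) [MetricSpace X] [CompleteSpace X]
    (h : NearlyUniformlyConvex X) : MetricReflexive X := by
  intro I _ _ _ C hne hbd hcl hcv hdec
  have hTne : ∀ u : X, (famT C u).Nonempty := famT_nonempty hne hbd hdec
  have step := nuc_center_step h hne hbd hcl hcv hdec
  obtain ⟨y₀, -⟩ := hne (Classical.arbitrary I)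
  choose F hF1 hF2 using fun (y : X) (n : ℕ) =>
    step y ((1/2 : ℝ) ^ n) (by positivity)
  let z : ℕ → X := fun n => Nat.rec (F y₀ 0) (fun n zn => F zn (n + 1)) n
  have hzs : ∀ n, z (n + 1) = F (z n) (n + 1) := fun n => rfl
  have hrad : ∀ n, famRad C (z n) ≤ (1/2 : ℝ) ^ n := by
    intro n
    cases n with
    | zero => exact hF1 y₀ 0
    | succ n => exact hF1 (z n) (n + 1)
  have hdist : ∀ n, dist (z n) (z (n + 1)) ≤ 2 * (1/2 : ℝ) ^ n := by
    intro n
    have h1 := hF2 (z n) (n + 1)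
    have h2 := hrad n
    rw [hzs n] at *
    have h3 : (1/2 : ℝ) ^ (n + 1) ≤ (1/2 : ℝ) ^ n :=
      pow_le_pow_of_le_one (by norm_num) (by norm_num) (Nat.le_succ n)
    calc dist (z n) (F (z n) (n + 1)) ≤ famRad C (z n) + (1/2 : ℝ) ^ (n + 1) := h1
    _ ≤ 2 * (1/2 : ℝ) ^ n := by linarith
  have hcauchy : CauchySeq z := cauchySeq_of_le_geometric (1/2) 2 (by norm_num) hdist
  obtain ⟨p, hp⟩ := cauchySeq_tendsto_of_complete hcauchy
  refine ⟨p, Set.mem_iInter.2 fun i => ?_⟩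
  rw [← (hcl i).closure_eq, Metric.mem_closure_iff]
  intro η hη
  obtain ⟨N, hN⟩ := Metric.tendsto_atTop.1 hp (η/3) (by linarith)
  obtain ⟨n₀, hn₀⟩ := exists_pow_lt_of_lt_one (show (0:ℝ) < η/3 by linarith)
    (show (1/2 : ℝ) < 1 by norm_num)
  set n := max N n₀ with hn
  have hpow : (1/2 : ℝ) ^ n < η/3 :=
    lt_of_le_of_lt (pow_le_pow_of_le_one (by norm_num) (by norm_num) (le_max_right N n₀)) hn₀
  have hdzn : dist (z n) p < η/3 := hN n (le_max_left N n₀)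
  have hmem : ((1/2 : ℝ) ^ n + η/3) ∈ famT C (z n) :=
    mem_famT_of_lt (hTne (z n)) (lt_of_le_of_lt (hrad n) (by linarith))
  obtain ⟨w, hw1, hw2⟩ := hmem i
  refine ⟨w, hw2, ?_⟩
  have hzw : dist (z n) w ≤ (1/2 : ℝ) ^ n + η/3 := Metric.mem_closedBall.1 ?_ 
  · calc dist p w ≤ dist p (z n) + dist (z n) w := dist_triangle _ _ _
    _ ≤ dist p (z n) + ((1/2 : ℝ) ^ n + η/3) := by linarith
    _ < η/3 + (η/3 + η/3) := by rw [dist_comm]; linarith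
    _ = η := by ring
  · rwa [Metric.mem_closedBall, dist_comm] at hw1
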